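/- Let v₀ ∈ [0,1]. If W satisfies the minimal constraints, W·ln W, W², and W³ are integrable, Var(X) ≥ v₀ where Var(X) := ∫ W(q,p) · (π·W(q,p) − μ/2)² dq dp, and the purity μ of W satisfies μ ≤ 4 − 2√(3 − v₀), then S[W] ≥ 1 + ln π. -/

import Mathlib

open Real MeasureTheory

/-- Second-order logarithm bound: for `0 < t ≤ 1`,
`log t ≤ (t - 1) - (1 - t)²/2`. -/
lemma wigner_log_le_quad {t : ℝ} (ht : 0 < t) (ht1 : t ≤ 1) :
    Real.log t ≤ (t - 1) - (1 - t) ^ 2 / 2 := by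
  have key : (1 - t) + (1 - t) ^ 2 / 2 ≤ -Real.log t := by
    have h1 : -Real.log t = ∫ x in t..1, x⁻¹ := by
      rw [integral_inv_of_pos ht one_pos, Real.log_div one_ne_zero (ne_of_gt ht),
        Real.log_one]
      ring
    have h2 : (∫ x in t..1, (2 - x)) = (1 - t) + (1 - t) ^ 2 / 2 := by
      rw [intervalIntegral.integral_sub (intervalIntegrable_const (c := (2:ℝ)))
        intervalIntegral.intervalIntegrable_id, integral_id, intervalIntegral.integral_const,
        smul_eq_mul]
      ring
    rw [h1, ← h2]
    apply intervalIntegral.integral_mono_on ht1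
    · exact (intervalIntegrable_const (c := (2:ℝ))).sub intervalIntegral.intervalIntegrable_id
    · exact intervalIntegral.intervalIntegrable_inv
        (fun x hx => ne_of_gt (lt_of_lt_of_le ht ((Set.uIcc_of_le ht1 ▸ hx).1)))
        continuousOn_id
    · intro x hx
      have hx0 : 0 < x := lt_of_lt_of_le ht hx.1
      nlinarith [sq_nonneg (x - 1), mul_inv_cancel₀ (ne_of_gt hx0)]
  nlinarith [key]

/-- Let `v₀ ∈ [0,1]`. If `W` satisfies the minimal constraints, `W·ln W`, `W²`, `W³` are
integrable, `Var(X) ≥ v₀` where `Var(X) = ∫ W (π W − μ/2)²`, and the purity `μ = 2π ∫ W²`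
satisfies `μ ≤ 4 − 2√(3 − v₀)`, then `S[W] ≥ 1 + ln π`. -/
theorem wigner_conjecture_variance_refined_threshold (v₀ : ℝ)
    (hv0 : 0 ≤ v₀) (hv1 : v₀ ≤ 1)
    (W : ℝ × ℝ → ℝ) (hmeas : Measurable W)
    (hpos : ∀ z, 0 ≤ W z)
    (hnorm : ∫ z, W z = 1)
    (hbound : ∀ z, Real.pi * W z ≤ 1)
    (hlog : Integrable (fun z => W z * Real.log (W z)))
    (hsq : Integrable (fun z => (W z) ^ 2))
    (hcube : Integrable (fun z => (W z) ^ 3))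
    (hvar : (∫ z, W z * (Real.pi * W z - (2 * Real.pi * ∫ w, (W w) ^ 2) / 2) ^ 2) ≥ v₀)
    (hmu : 2 * Real.pi * (∫ z, (W z) ^ 2) ≤ 4 - 2 * Real.sqrt (3 - v₀)) :
    (-∫ z, W z * Real.log (W z)) ≥ 1 + Real.log Real.pi := by
  have hπ : (0:ℝ) < Real.pi := Real.pi_pos
  have hWint : Integrable W := by
    by_contra h
    rw [integral_undef h] at hnorm
    norm_num at hnorm
  set A := ∫ z, (W z) ^ 2 with hA
  set B := ∫ z, (W z) ^ 3 with hB
  -- pointwise lower bound on -W log W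
  have hpt : ∀ z, (Real.log Real.pi + 3/2) * W z + (-(2*Real.pi)) * (W z) ^ 2
      + (Real.pi ^ 2 / 2) * (W z) ^ 3 ≤ -(W z * Real.log (W z)) := by
    intro z
    rcases eq_or_lt_of_le (hpos z) with h0 | h0
    · simp [← h0]
    · have ht : 0 < Real.pi * W z := mul_pos hπ h0
      have key := wigner_log_le_quad ht (hbound z)
      rw [Real.log_mul (ne_of_gt hπ) (ne_of_gt h0)] at key
      nlinarith [mul_le_mul_of_nonneg_left key (le_of_lt h0)]
  have hg : Integrable (fun z => (Real.log Real.pi + 3/2) * W z + (-(2*Real.pi)) * (W z) ^ 2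
      + (Real.pi ^ 2 / 2) * (W z) ^ 3) :=
    ((hWint.const_mul _).add (hsq.const_mul _)).add (hcube.const_mul _)
  have hmono : ∫ z, ((Real.log Real.pi + 3/2) * W z + (-(2*Real.pi)) * (W z) ^ 2
      + (Real.pi ^ 2 / 2) * (W z) ^ 3) ≤ ∫ z, -(W z * Real.log (W z)) :=
    integral_mono hg hlog.neg hpt
  have i1 : Integrable (fun z => (Real.log Real.pi + 3/2) * W z) := hWint.const_mul _
  have i2 : Integrable (fun z => (-(2*Real.pi)) * (W z) ^ 2) := hsq.const_mul _
  have i3 : Integrable (fun z => (Real.pi ^ 2 / 2) * (W z) ^ 3) := hcube.const_mul _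
  have i12 : Integrable (fun z => (Real.log Real.pi + 3/2) * W z
      + (-(2*Real.pi)) * (W z) ^ 2) := i1.add i2
  have hIg : ∫ z, ((Real.log Real.pi + 3/2) * W z + (-(2*Real.pi)) * (W z) ^ 2
      + (Real.pi ^ 2 / 2) * (W z) ^ 3)
      = (Real.log Real.pi + 3/2) - 2 * Real.pi * A + (Real.pi ^ 2 / 2) * B := by
    rw [integral_add i12 i3, integral_add i1 i2,
      integral_const_mul, integral_const_mul, integral_const_mul, hnorm, ← hA, ← hB]
    ring
  rw [integral_neg, hIg] at hmono
  -- variance expansion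
  set m := Real.pi * A with hm
  have hvar' : Real.pi ^ 2 * B - m ^ 2 ≥ v₀ := by
    have hexp : (fun z => W z * (Real.pi * W z - (2 * Real.pi * A) / 2) ^ 2)
        = fun z => (Real.pi ^ 2) * (W z) ^ 3 + (-(2 * Real.pi * m)) * (W z) ^ 2
          + (m ^ 2) * W z := by
      funext z; rw [hm]; ring
    have j1 : Integrable (fun z => (Real.pi ^ 2) * (W z) ^ 3) := hcube.const_mul _
    have j2 : Integrable (fun z => (-(2 * Real.pi * m)) * (W z) ^ 2) := hsq.const_mul _
    have j3 : Integrable (fun z => (m ^ 2) * W z) := hWint.const_mul _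
    have j12 : Integrable (fun z => (Real.pi ^ 2) * (W z) ^ 3
        + (-(2 * Real.pi * m)) * (W z) ^ 2) := j1.add j2
    rw [hexp] at hvar
    rw [integral_add j12 j3, integral_add j1 j2,
      integral_const_mul, integral_const_mul, integral_const_mul, hnorm, ← hA, ← hB] at hvar
    rw [hm]
    nlinarith [hvar]
  -- purity bound
  have hsqrt : (2 : ℝ) - m ≥ Real.sqrt (3 - v₀) := by
    rw [hm]; nlinarith [hmu]
  have hsq3 : Real.sqrt (3 - v₀) ^ 2 = 3 - v₀ := Real.sq_sqrt (by linarith)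
  have hsn : 0 ≤ Real.sqrt (3 - v₀) := Real.sqrt_nonneg _
  nlinarith [hmono, hvar', hsqrt, hsq3, hsn, sq_nonneg (2 - m - Real.sqrt (3 - v₀))]
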